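/- arXiv:2112.15002 — 3 statements merged into one kernel-verified Lean document; each statement's English description precedes it below -/
import Mathlib

section
/- Parameter-shift rule: let d ≥ 1, let G₁,…,G_p ∈ M_d(ℂ) be Hermitian unitary matrices, let O ∈ M_d(ℂ) be Hermitian, and let ρ ∈ M_d(ℂ) be a density matrix. Define f : ℝ^p → ℝ by f(θ₁,…,θ_p) = Tr[O · V_p(θ_p) ⋯ V_1(θ₁) · ρ · V_1(θ₁)† ⋯ V_p(θ_p)†], where V_j(θ_j) = exp(−i θ_j G_j). Then for every j ∈ {1,…,p} and every θ ∈ ℝ^p, ∂f/∂θ_j (θ) = f(θ + (π/4)e_j) − f(θ − (π/4)e_j), where e_j is the j-th standard basis vector of ℝ^p. -/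
open Matrix MeasureTheory
open scoped ComplexOrder

noncomputable section

/-- The rotation `W(θ) = exp(−iθG)` generated by a matrix `G`. -/
def Wrot {d : ℕ} (G : Matrix (Fin d) (Fin d) ℂ) (θ : ℝ) : Matrix (Fin d) (Fin d) ℂ :=
  NormedSpace.exp ((-(Complex.I * (θ : ℂ))) • G)

/-- The commuting part `O₁ = (O + G·O·G)/2` of `O` with respect to `G`. -/
def Opart1 {d : ℕ} (G O : Matrix (Fin d) (Fin d) ℂ) : Matrix (Fin d) (Fin d) ℂ :=
  (2⁻¹ : ℂ) • (O + G * O * G)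

/-- The anticommuting part `O₂ = (O − G·O·G)/2` of `O` with respect to `G`. -/
def Opart2 {d : ℕ} (G O : Matrix (Fin d) (Fin d) ℂ) : Matrix (Fin d) (Fin d) ℂ :=
  (2⁻¹ : ℂ) • (O - G * O * G)

section Aux

open scoped Nat

/-- Closed form of the rotation generated by an involutory matrix. -/
lemma Wrot_eq {d : ℕ} (G : Matrix (Fin d) (Fin d) ℂ) (hG : G * G = 1) (t : ℝ) :
    Wrot G t = (Real.cos t : ℂ) • (1 : Matrix (Fin d) (Fin d) ℂ)
      + (-(Complex.I * (Real.sin t : ℂ))) • G := by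
  set X : Matrix (Fin d) (Fin d) ℂ := (-(Complex.I * (t : ℂ))) • G with hX
  have hG2 : G ^ 2 = 1 := by rw [pow_two, hG]
  have hc2 : (-(Complex.I * (t:ℂ)))^2 = -((t:ℂ)^2) := by
    rw [neg_sq, mul_pow, Complex.I_sq, neg_one_mul]
  have he : ∀ k : ℕ, (((2*k)! : ℂ)⁻¹) • X ^ (2*k)
      = ((-1:ℂ)^k * (t:ℂ)^(2*k) / ((2*k)! : ℂ)) • (1 : Matrix (Fin d) (Fin d) ℂ) := by
    intro k
    rw [hX, smul_pow, pow_mul, pow_mul, hc2, hG2, one_pow, smul_smul]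
    congr 1
    rw [neg_pow, ← pow_mul]
    ring
  have ho : ∀ k : ℕ, (((2*k+1)! : ℂ)⁻¹) • X ^ (2*k+1)
      = (-Complex.I * ((-1:ℂ)^k * (t:ℂ)^(2*k+1) / ((2*k+1)! : ℂ))) • G := by
    intro k
    have hGodd : G ^ (2*k+1) = G := by rw [pow_succ, pow_mul, hG2, one_pow, one_mul]
    rw [hX, smul_pow, hGodd, smul_smul]
    congr 1
    rw [pow_succ, pow_mul, hc2, neg_pow, ← pow_mul, pow_succ]
    ring
  have heven : HasSum (fun k : ℕ => (((2*k)! : ℂ)⁻¹) • X ^ (2*k))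
      ((Real.cos t : ℂ) • (1 : Matrix (Fin d) (Fin d) ℂ)) := by
    have h := (Complex.hasSum_cos (t:ℂ)).smul_const (1 : Matrix (Fin d) (Fin d) ℂ)
    rw [← Complex.ofReal_cos] at h
    simpa only [he] using h
  have hodd : HasSum (fun k : ℕ => (((2*k+1)! : ℂ)⁻¹) • X ^ (2*k+1))
      ((-(Complex.I * (Real.sin t : ℂ))) • G) := by
    have h := (((Complex.hasSum_sin (t:ℂ)).mul_left (-Complex.I)).smul_const G)
    rw [← Complex.ofReal_sin] at h
    have h' : (-Complex.I * (Real.sin t : ℂ)) = -(Complex.I * (Real.sin t : ℂ)) := by ring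
    rw [h'] at h
    simpa only [ho] using h
  have hsum : HasSum (fun n : ℕ => ((n ! : ℂ)⁻¹) • X ^ n)
      ((Real.cos t : ℂ) • (1 : Matrix (Fin d) (Fin d) ℂ)
        + (-(Complex.I * (Real.sin t : ℂ))) • G) :=
    HasSum.even_add_odd heven hodd
  rw [Wrot, NormedSpace.exp_eq_tsum ℂ]
  exact hsum.tsum_eq

lemma ofFn_reverse {n : ℕ} {α : Type*} (f : Fin n → α) :
    (List.ofFn f).reverse = List.ofFn (f ∘ Fin.rev) := by
  apply List.ext_getElem
  · simp
  · intro i h1 h2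
    simp only [List.getElem_reverse, List.getElem_ofFn, Function.comp_apply]
    congr 1
    ext
    simp only [List.length_ofFn, List.length_reverse] at h1 h2 ⊢
    simp [Fin.val_rev]
    omega

lemma ofFn_update_eq_set {n : ℕ} {α : Type*} (g : Fin n → α) (j : Fin n) (x : α) :
    List.ofFn (Function.update g j x) = (List.ofFn g).set j x := by
  apply List.ext_getElem
  · simp
  · intro i h1 h2
    simp only [List.length_ofFn] at h1
    by_cases h : i = (j : ℕ)
    · simp [List.getElem_ofFn, List.getElem_set, Function.update_apply, h, Fin.ext_iff]
    · simp [List.getElem_ofFn, List.getElem_set, Function.update_apply, Fin.ext_iff, h,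
        Ne.symm h]

lemma prod_ofFn_update {n : ℕ} {M : Type*} [Monoid M] (g : Fin n → M) (j : Fin n) :
    ∃ A B : M, ∀ x : M, (List.ofFn (Function.update g j x)).reverse.prod = A * x * B := by
  refine ⟨((List.ofFn (g ∘ Fin.rev)).take (Fin.rev j)).prod,
          ((List.ofFn (g ∘ Fin.rev)).drop (Fin.rev j + 1)).prod, fun x => ?_⟩
  have h1 : (Function.update g j x) ∘ Fin.rev
      = Function.update (g ∘ Fin.rev) (Fin.rev j) x := by
    have h2 := Function.update_comp_eq_of_injective g
      (Fin.rev_injective (n := n)) (Fin.rev j) x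
    rw [Fin.rev_rev] at h2
    exact h2
  rw [ofFn_reverse, h1, ofFn_update_eq_set, List.prod_set]
  have hlt : ((Fin.rev j : Fin n) : ℕ) < (List.ofFn (g ∘ Fin.rev)).length := by
    simpa using (Fin.rev j).isLt
  rw [if_pos hlt]

lemma trig_shift (g : ℝ → ℝ) (a b e : ℝ)
    (hg : ∀ t, g t = Real.cos t * Real.cos t * a + Real.sin t * Real.sin t * b
      + Real.cos t * Real.sin t * e) (t : ℝ) :
    deriv g t = g (t + Real.pi / 4) - g (t - Real.pi / 4) := by
  have hgf : g = fun t => Real.cos t * Real.cos t * a + Real.sin t * Real.sin t * b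
      + Real.cos t * Real.sin t * e := funext hg
  have hc := Real.hasDerivAt_cos t
  have hs := Real.hasDerivAt_sin t
  have hD := (((hc.mul hc).mul_const a).add ((hs.mul hs).mul_const b)).add
    ((hc.mul hs).mul_const e)
  have hd : deriv g t = 2 * Real.cos t * Real.sin t * (b - a)
      + (Real.cos t * Real.cos t - Real.sin t * Real.sin t) * e := by
    rw [hgf]
    rw [show (fun t => Real.cos t * Real.cos t * a + Real.sin t * Real.sin t * b + Real.cos t * Real.sin t * e) = (((fun y => (Real.cos * Real.cos) y * a) + fun y => (Real.sin * Real.sin) y * b) + fun y => (Real.cos * Real.sin) y * e) from rfl, hD.deriv]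
    ring
  rw [hd, hg, hg, Real.cos_add, Real.sin_add, Real.cos_sub, Real.sin_sub,
    Real.cos_pi_div_four, Real.sin_pi_div_four]
  have h2 : Real.sqrt 2 ^ 2 = 2 := Real.sq_sqrt (by norm_num)
  ring_nf
  rw [h2]
  ring

end Aux

/-- **Parameter-shift rule**: for `f(θ) = Tr[O · V_p(θ_p) ⋯ V_1(θ_1) · ρ · V_1(θ_1)† ⋯ V_p(θ_p)†]`
with `V_j(t) = exp(−i t G_j)` for Hermitian unitary generators `G_j`, one has
`∂f/∂θ_j (θ) = f(θ + (π/4)e_j) − f(θ − (π/4)e_j)`. -/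
theorem parameter_shift_rule
    (d p : ℕ) (hd : 1 ≤ d) (hp : 1 ≤ p)
    (G : Fin p → Matrix (Fin d) (Fin d) ℂ)
    (hGherm : ∀ j, (G j).IsHermitian) (hGunit : ∀ j, G j * G j = 1)
    (O : Matrix (Fin d) (Fin d) ℂ) (hO : O.IsHermitian)
    (ρ : Matrix (Fin d) (Fin d) ℂ) (hρ : ρ.PosSemidef) (hρtr : ρ.trace = 1)
    (f : (Fin p → ℝ) → ℝ)
    (hf : ∀ θ : Fin p → ℝ, f θ =
      ((O * (((List.ofFn fun j : Fin p => Wrot (G j) (θ j)).reverse.prod) * ρ *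
        ((List.ofFn fun j : Fin p => Wrot (G j) (θ j)).reverse.prod)ᴴ)).trace.re))
    (j : Fin p) (θ : Fin p → ℝ) :
    deriv (fun t => f (Function.update θ j t)) (θ j)
      = f (Function.update θ j (θ j + Real.pi / 4))
        - f (Function.update θ j (θ j - Real.pi / 4)) := by
  classical
  obtain ⟨A, B, hAB⟩ := prod_ofFn_update (fun k : Fin p => Wrot (G k) (θ k)) j
  have hfun : ∀ t : ℝ, (fun k : Fin p => Wrot (G k) (Function.update θ j t k))
      = Function.update (fun k : Fin p => Wrot (G k) (θ k)) j (Wrot (G j) t) := by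
    intro t; funext k
    rcases eq_or_ne k j with rfl | hk
    · simp
    · simp [Function.update_of_ne hk]
  have hM : ∀ t : ℝ,
      (List.ofFn fun k : Fin p => Wrot (G k) (Function.update θ j t k)).reverse.prod
      = (Real.cos t : ℂ) • (A * B) + (-(Complex.I * (Real.sin t : ℂ))) • (A * G j * B) := by
    intro t
    rw [hfun t, hAB, Wrot_eq (G j) (hGunit j) t]
    simp only [mul_add, add_mul, mul_smul_comm, smul_mul_assoc, mul_one, mul_assoc]
  set P : Matrix (Fin d) (Fin d) ℂ := A * B with hPdef
  set R : Matrix (Fin d) (Fin d) ℂ := A * G j * B with hRdef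
  have htr : ∀ t : ℝ,
      (O * (((Real.cos t : ℂ) • P + (-(Complex.I * (Real.sin t : ℂ))) • R) * ρ *
        ((Real.cos t : ℂ) • P + (-(Complex.I * (Real.sin t : ℂ))) • R)ᴴ)).trace
      = ((Real.cos t * Real.cos t : ℝ) : ℂ) * (O * (P * ρ * Pᴴ)).trace
        + ((Real.sin t * Real.sin t : ℝ) : ℂ) * (O * (R * ρ * Rᴴ)).trace
        + ((Real.cos t * Real.sin t : ℝ) : ℂ) *
            (Complex.I * ((O * (P * ρ * Rᴴ)).trace - (O * (R * ρ * Pᴴ)).trace)) := by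
    intro t
    have h1 : star ((Real.cos t : ℝ) : ℂ) = ((Real.cos t : ℝ) : ℂ) := by
      rw [Complex.star_def]; exact Complex.conj_ofReal _
    have h2 : star (-(Complex.I * ((Real.sin t : ℝ) : ℂ)))
        = Complex.I * ((Real.sin t : ℝ) : ℂ) := by
      rw [star_neg, Complex.star_def, _root_.map_mul, Complex.conj_I, Complex.conj_ofReal]
      ring
    rw [conjTranspose_add, conjTranspose_smul, conjTranspose_smul, h1, h2]
    simp only [mul_add, add_mul, smul_mul_assoc, mul_smul_comm, smul_smul,
      Matrix.trace_add, Matrix.trace_smul, smul_eq_mul]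
    push_cast
    ring_nf
    simp only [Complex.I_sq]
    ring
  have hg : ∀ t : ℝ, f (Function.update θ j t)
      = Real.cos t * Real.cos t * (O * (P * ρ * Pᴴ)).trace.re
        + Real.sin t * Real.sin t * (O * (R * ρ * Rᴴ)).trace.re
        + Real.cos t * Real.sin t *
            (Complex.I * ((O * (P * ρ * Rᴴ)).trace - (O * (R * ρ * Pᴴ)).trace)).re := by
    intro t
    rw [hf (Function.update θ j t), hM t, htr t]
    simp only [Complex.add_re, Complex.re_ofReal_mul]
  exact trig_shift (fun t => f (Function.update θ j t)) _ _ _ hg (θ j)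
end
end

section
/- Let d ≥ 1, let G ∈ M_d(ℂ) be a Hermitian unitary matrix, let O ∈ M_d(ℂ) be Hermitian, and let ρ₁, ρ₂ ∈ M_d(ℂ) be density matrices. With W(θ) = exp(−iθG), O₁ = (O + G·O·G)/2, and O₂ = (O − G·O·G)/2, one has (1/(2π)) ∫₀^{2π} Tr[O·W(θ)·ρ₁·W(θ)†] · Tr[O·W(θ)·ρ₂·W(θ)†] dθ = Tr[O₁ρ₁]·Tr[O₁ρ₂] + (1/2)·Tr[O₂ρ₁]·Tr[O₂ρ₂] + (1/2)·Tr[iO₂Gρ₁]·Tr[iO₂Gρ₂]. -/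
open Matrix MeasureTheory
open scoped ComplexOrder

noncomputable section

lemma integral_key (p q r p' q' r' : ℝ) :
    ∫ θ in (0:ℝ)..(2*Real.pi),
        (p + q*Real.cos (2*θ) + r*Real.sin (2*θ))
          * (p' + q'*Real.cos (2*θ) + r'*Real.sin (2*θ))
      = 2*Real.pi*(p*p') + Real.pi*(q*q') + Real.pi*(r*r') := by
  have key := intervalIntegral.integral_eq_sub_of_hasDerivAt
    (f := fun θ : ℝ => p*p'*θ + (p*q'+q*p')*(Real.sin (2*θ)/2)
      - (p*r'+r*p')*(Real.cos (2*θ)/2)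
      + q*q'*(θ/2 + Real.sin (4*θ)/8) + r*r'*(θ/2 - Real.sin (4*θ)/8)
      - (q*r'+r*q')*(Real.cos (4*θ)/8))
    (f' := fun θ : ℝ => (p + q*Real.cos (2*θ) + r*Real.sin (2*θ))
      * (p' + q'*Real.cos (2*θ) + r'*Real.sin (2*θ)))
    (a := (0:ℝ)) (b := 2*Real.pi)
    ?_ ?_
  · rw [key]
    have s1 : Real.sin (2*(2*Real.pi)) = 0 := by
      rw [show 2*(2*Real.pi) = (4:ℕ)*Real.pi by push_cast; ring]
      exact Real.sin_nat_mul_pi 4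
    have s2 : Real.sin (4*(2*Real.pi)) = 0 := by
      rw [show 4*(2*Real.pi) = (8:ℕ)*Real.pi by push_cast; ring]
      exact Real.sin_nat_mul_pi 8
    have c1 : Real.cos (2*(2*Real.pi)) = 1 := by
      rw [show 2*(2*Real.pi) = (2:ℕ)*(2*Real.pi) by push_cast; ring]
      exact Real.cos_nat_mul_two_pi 2
    have c2 : Real.cos (4*(2*Real.pi)) = 1 := by
      rw [show 4*(2*Real.pi) = (4:ℕ)*(2*Real.pi) by push_cast; ring]
      exact Real.cos_nat_mul_two_pi 4
    rw [s1, s2, c1, c2]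
    norm_num
    ring
  · intro θ _
    have h2 : HasDerivAt (fun θ : ℝ => Real.sin (2*θ)) (Real.cos (2*θ) * 2) θ := by
      have h := (Real.hasDerivAt_sin (2*θ)).comp θ ((hasDerivAt_id θ).const_mul 2)
      simp only [id_eq, mul_one] at h; exact h
    have h2c : HasDerivAt (fun θ : ℝ => Real.cos (2*θ)) (-Real.sin (2*θ) * 2) θ := by
      have h := (Real.hasDerivAt_cos (2*θ)).comp θ ((hasDerivAt_id θ).const_mul 2)
      simp only [id_eq, mul_one] at h; exact h
    have h4 : HasDerivAt (fun θ : ℝ => Real.sin (4*θ)) (Real.cos (4*θ) * 4) θ := by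
      have h := (Real.hasDerivAt_sin (4*θ)).comp θ ((hasDerivAt_id θ).const_mul 4)
      simp only [id_eq, mul_one] at h; exact h
    have h4c : HasDerivAt (fun θ : ℝ => Real.cos (4*θ)) (-Real.sin (4*θ) * 4) θ := by
      have h := (Real.hasDerivAt_cos (4*θ)).comp θ ((hasDerivAt_id θ).const_mul 4)
      simp only [id_eq, mul_one] at h; exact h
    have hid : HasDerivAt (fun θ : ℝ => θ) 1 θ := hasDerivAt_id θ
    have H := (((((hid.const_mul (p*p')).add
        ((h2.div_const 2).const_mul (p*q'+q*p'))).sub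
        ((h2c.div_const 2).const_mul (p*r'+r*p'))).add
        (((hid.div_const 2).add (h4.div_const 8)).const_mul (q*q'))).add
        (((hid.div_const 2).sub (h4.div_const 8)).const_mul (r*r'))).sub
        ((h4c.div_const 8).const_mul (q*r'+r*q'))
    convert H using 1
    · rfl
    have hc4 : Real.cos (4*θ) = 2 * Real.cos (2*θ)^2 - 1 := by
      rw [show (4:ℝ)*θ = 2*(2*θ) by ring, Real.cos_two_mul]
    have hs4 : Real.sin (4*θ) = 2 * Real.sin (2*θ) * Real.cos (2*θ) := by
      rw [show (4:ℝ)*θ = 2*(2*θ) by ring, Real.sin_two_mul]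
    have hpyth : Real.sin (2*θ)^2 + Real.cos (2*θ)^2 = 1 := Real.sin_sq_add_cos_sq _
    linear_combination ((r*r' - q*q')/2) * hc4 + (-(q*r'+r*q')/2) * hs4 + (r*r') * hpyth
  · apply Continuous.intervalIntegrable
    fun_prop

lemma wrot_eq {d : ℕ} (G : Matrix (Fin d) (Fin d) ℂ) (hG : G * G = 1) (θ : ℝ) :
    Wrot G θ = (Real.cos θ : ℂ) • (1 : Matrix (Fin d) (Fin d) ℂ)
        + (-(Complex.I) * (Real.sin θ : ℂ)) • G := by
  rw [Wrot]
  set z : ℂ := -(Complex.I * (θ : ℂ)) with hz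
  have hGpow_even : ∀ n : ℕ, G ^ (2 * n) = 1 := by
    intro n; rw [pow_mul, pow_two, hG, one_pow]
  have hGpow_odd : ∀ n : ℕ, G ^ (2 * n + 1) = G := by
    intro n; rw [pow_succ, hGpow_even, one_mul]
  have hz2 : z ^ 2 = -((θ : ℂ) ^ 2) := by
    rw [hz]; ring_nf; rw [Complex.I_sq]; ring
  have hze : ∀ n : ℕ, z ^ (2 * n) = (-1 : ℂ) ^ n * (θ : ℂ) ^ (2 * n) := by
    intro n
    rw [pow_mul, hz2, pow_mul, neg_pow]
  have key : HasSum (fun n : ℕ => ((n.factorial : ℂ))⁻¹ • (z • G) ^ n)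
      ((Real.cos θ : ℂ) • (1 : Matrix (Fin d) (Fin d) ℂ)
        + (-(Complex.I) * (Real.sin θ : ℂ)) • G) := by
    refine HasSum.even_add_odd ?_ ?_
    · have hc := (Complex.hasSum_cos (θ : ℂ)).smul_const
        (1 : Matrix (Fin d) (Fin d) ℂ)
      rw [← Complex.ofReal_cos] at hc
      convert hc using 2 with n
      rw [smul_pow, hGpow_even, hze, smul_smul]
      congr 1
      field_simp
    · have hs := ((Complex.hasSum_sin (θ : ℂ)).mul_left (-(Complex.I))).smul_const G
      rw [← Complex.ofReal_sin] at hs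
      convert hs using 2 with n
      rw [smul_pow, hGpow_odd, smul_smul]
      congr 1
      rw [pow_succ, hze, hz]
      have hf : ((2*n+1).factorial : ℂ) ≠ 0 := by
        exact_mod_cast (Nat.factorial_ne_zero (2*n+1))
      field_simp
      ring
  rw [NormedSpace.exp_eq_tsum ℂ]
  exact key.tsum_eq

lemma trace_W {d : ℕ} (G O ρ : Matrix (Fin d) (Fin d) ℂ)
    (hGh : Gᴴ = G) (hG : G * G = 1) (θ : ℝ) :
    (O * (Wrot G θ * ρ * (Wrot G θ)ᴴ)).trace
      = (Opart1 G O * ρ).trace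
        + (Real.cos (2*θ) : ℂ) * (Opart2 G O * ρ).trace
        - (Real.sin (2*θ) : ℂ) * ((Complex.I • (Opart2 G O * G)) * ρ).trace := by
  have hW := wrot_eq G hG θ
  have hWH : (Wrot G θ)ᴴ = (Real.cos θ : ℂ) • (1 : Matrix (Fin d) (Fin d) ℂ)
      + (Complex.I * (Real.sin θ : ℂ)) • G := by
    rw [hW]
    simp [conjTranspose_add, conjTranspose_smul, hGh, ← Complex.ofReal_cos,
      ← Complex.ofReal_sin, Complex.conj_ofReal, mul_comm]
  have hc2 : (Real.cos (2*θ) : ℂ) = (Real.cos θ:ℂ)^2 - (Real.sin θ:ℂ)^2 := by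
    rw [Real.cos_two_mul']; push_cast; ring
  have hs2 : (Real.sin (2*θ):ℂ) = 2*(Real.sin θ:ℂ)*(Real.cos θ:ℂ) := by
    rw [Real.sin_two_mul]; push_cast; ring
  have hpy : (Real.sin θ:ℂ)^2 + (Real.cos θ:ℂ)^2 = 1 := by
    exact_mod_cast congrArg (Complex.ofReal) (Real.sin_sq_add_cos_sq θ)
  have hGG : ∀ ρ' : Matrix (Fin d) (Fin d) ℂ, G * (G * ρ') = ρ' := by
    intro ρ'; rw [← Matrix.mul_assoc, hG, Matrix.one_mul]
  have e1 : (O*(ρ*G)).trace = (G*(O*ρ)).trace := by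
    rw [← Matrix.mul_assoc, Matrix.trace_mul_cycle, Matrix.mul_assoc]
  have e2 : (O*(G*(ρ*G))).trace = (G*(O*(G*ρ))).trace := by
    rw [show O*(G*(ρ*G)) = (O*(G*ρ))*G by noncomm_ring,
        Matrix.trace_mul_comm, ← Matrix.mul_assoc]
  rw [hWH, hW, Opart1, Opart2]
  simp only [Matrix.add_mul, Matrix.mul_add, Matrix.smul_mul, Matrix.mul_smul,
    Matrix.one_mul, Matrix.mul_one, Matrix.sub_mul, Matrix.mul_sub, smul_add,
    smul_sub, Matrix.trace_add, Matrix.trace_sub, Matrix.trace_smul,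
    smul_eq_mul, Matrix.mul_assoc, smul_smul, hGG]
  rw [e1, e2]
  linear_combination (((G*(O*(G*ρ))).trace - (O*ρ).trace)/2) * hc2
    + (Complex.I*((O*(G*ρ)).trace - (G*(O*ρ)).trace)/2) * hs2
    + (((O*ρ).trace + (G*(O*(G*ρ))).trace)/2) * hpy
    + (-((G*(O*(G*ρ))).trace) * ((Real.sin θ:ℂ))^2) * Complex.I_sq

/-- **Lemma 2**: for a Hermitian unitary `G`, a Hermitian observable `O` and density
matrices `ρ₁, ρ₂`, with `W(θ) = exp(−iθG)`, `O₁ = (O + GOG)/2` and `O₂ = (O − GOG)/2`,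
`E_θ Tr[O W ρ₁ W†]·Tr[O W ρ₂ W†] = Tr[O₁ρ₁]Tr[O₁ρ₂] + ½Tr[O₂ρ₁]Tr[O₂ρ₂] + ½Tr[iO₂Gρ₁]Tr[iO₂Gρ₂]`,
with `θ` uniform on `[0, 2π]`. -/
theorem expectation_product_trace
    (d : ℕ) (hd : 1 ≤ d)
    (G O : Matrix (Fin d) (Fin d) ℂ)
    (hGherm : G.IsHermitian) (hGunit : G * G = 1) (hO : O.IsHermitian)
    (ρ₁ ρ₂ : Matrix (Fin d) (Fin d) ℂ)
    (hρ₁ : ρ₁.PosSemidef) (hρ₁tr : ρ₁.trace = 1)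
    (hρ₂ : ρ₂.PosSemidef) (hρ₂tr : ρ₂.trace = 1) :
    (1 / (2 * Real.pi)) * ∫ θ in (0:ℝ)..(2 * Real.pi),
        ((O * (Wrot G θ * ρ₁ * (Wrot G θ)ᴴ)).trace.re)
          * ((O * (Wrot G θ * ρ₂ * (Wrot G θ)ᴴ)).trace.re)
      = ((Opart1 G O * ρ₁).trace.re) * ((Opart1 G O * ρ₂).trace.re)
        + (1 / 2) * ((Opart2 G O * ρ₁).trace.re) * ((Opart2 G O * ρ₂).trace.re)
        + (1 / 2) * (((Complex.I • (Opart2 G O * G)) * ρ₁).trace.re)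
            * (((Complex.I • (Opart2 G O * G)) * ρ₂).trace.re) := by
  have hGh : Gᴴ = G := hGherm
  have hpt : ∀ (ρ : Matrix (Fin d) (Fin d) ℂ) (θ : ℝ),
      ((O * (Wrot G θ * ρ * (Wrot G θ)ᴴ)).trace).re
        = (Opart1 G O * ρ).trace.re
          + (Opart2 G O * ρ).trace.re * Real.cos (2*θ)
          + (-(((Complex.I • (Opart2 G O * G)) * ρ).trace.re)) * Real.sin (2*θ) := by
    intro ρ θ
    rw [trace_W G O ρ hGh hGunit θ]
    simp only [Complex.add_re, Complex.sub_re, Complex.re_ofReal_mul]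
    ring
  rw [intervalIntegral.integral_congr
    (g := fun θ : ℝ =>
      ((Opart1 G O * ρ₁).trace.re
        + (Opart2 G O * ρ₁).trace.re * Real.cos (2*θ)
        + (-(((Complex.I • (Opart2 G O * G)) * ρ₁).trace.re)) * Real.sin (2*θ))
      * ((Opart1 G O * ρ₂).trace.re
        + (Opart2 G O * ρ₂).trace.re * Real.cos (2*θ)
        + (-(((Complex.I • (Opart2 G O * G)) * ρ₂).trace.re)) * Real.sin (2*θ)))
    (fun θ _ => by rw [hpt ρ₁ θ, hpt ρ₂ θ])]
  rw [integral_key]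
  have hπ : Real.pi ≠ 0 := Real.pi_ne_zero
  field_simp
end
end

section
/- Let d ≥ 1, let G ∈ M_d(ℂ) be a Hermitian unitary matrix, let O ∈ M_d(ℂ) be Hermitian, and let ρ ∈ M_d(ℂ) be a density matrix. With O₂ = (O − G·O·G)/2, the function g(θ) = Tr[O · exp(−iθG) · ρ · exp(iθG)] is differentiable on ℝ with g′(θ) = −2·sin(2θ)·Tr[O₂ρ] − 2·cos(2θ)·Tr[iO₂Gρ]; in particular g′(θ) = g(θ + π/4) − g(θ − π/4) for all θ ∈ ℝ. -/
open Matrix MeasureTheory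
open scoped ComplexOrder

noncomputable section

set_option maxHeartbeats 1000000 in
lemma exp_smul_sq_one {d : ℕ} (G : Matrix (Fin d) (Fin d) ℂ) (hG : G * G = 1) (z : ℂ) :
    NormedSpace.exp (z • G) =
      Complex.cosh z • (1 : Matrix (Fin d) (Fin d) ℂ) + Complex.sinh z • G := by
  letI : SeminormedRing (Matrix (Fin d) (Fin d) ℂ) := Matrix.linftyOpSemiNormedRing
  letI : NormedRing (Matrix (Fin d) (Fin d) ℂ) := Matrix.linftyOpNormedRing
  letI : NormedAlgebra ℂ (Matrix (Fin d) (Fin d) ℂ) := Matrix.linftyOpNormedAlgebra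
  have hG2 : ∀ k : ℕ, G ^ (2 * k) = 1 := fun k => by
    rw [pow_mul, show G ^ 2 = 1 by rw [pow_two, hG], one_pow]
  have he : HasSum (fun k : ℕ => ((Nat.factorial (2 * k) : ℂ))⁻¹ • (z • G) ^ (2 * k))
      (Complex.cosh z • (1 : Matrix (Fin d) (Fin d) ℂ)) := by
    have h := (Complex.hasSum_cosh z).smul_const (1 : Matrix (Fin d) (Fin d) ℂ)
    convert h using 2 with k
    rw [smul_pow, hG2, smul_smul]
    congr 1
    ring
  have ho : HasSum (fun k : ℕ => ((Nat.factorial (2 * k + 1) : ℂ))⁻¹ • (z • G) ^ (2 * k + 1))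
      (Complex.sinh z • G) := by
    have h := (Complex.hasSum_sinh z).smul_const G
    convert h using 2 with k
    rw [smul_pow, show G ^ (2 * k + 1) = G by rw [pow_succ, hG2, one_mul], smul_smul]
    congr 1
    ring
  exact (NormedSpace.exp_series_hasSum_exp' (𝕂 := ℂ) (z • G)).unique (he.even_add_odd ho)

lemma trace_expand {d : ℕ} (G O ρ : Matrix (Fin d) (Fin d) ℂ) (cc ss : ℂ) :
    (O * ((cc • (1:Matrix (Fin d) (Fin d) ℂ) + (-(ss * Complex.I)) • G) * ρ *
      (cc • 1 + (ss * Complex.I) • G))).trace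
    = cc ^ 2 * (O * ρ).trace + (cc * ss * Complex.I) * ((G * O) * ρ).trace
      - (cc * ss * Complex.I) * ((O * G) * ρ).trace
      + ss ^ 2 * ((G * O * G) * ρ).trace := by
  simp only [Matrix.add_mul, Matrix.mul_add, smul_mul_assoc, mul_smul_comm, Matrix.one_mul,
    Matrix.mul_one, smul_smul, neg_smul, neg_mul, Matrix.trace_add, Matrix.trace_neg,
    Matrix.trace_smul, smul_eq_mul, Matrix.mul_neg, Matrix.neg_mul, Matrix.trace_sub]
  have e1 : (O * (G * ρ)).trace = (O * G * ρ).trace := by rw [Matrix.mul_assoc]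
  have e2 : (O * (ρ * G)).trace = (G * O * ρ).trace := by
    rw [← Matrix.mul_assoc, Matrix.trace_mul_cycle]
  have e3 : (O * (G * ρ * G)).trace = (G * O * G * ρ).trace := by
    rw [show O * (G * ρ * G) = O * G * ρ * G by simp only [Matrix.mul_assoc],
      Matrix.trace_mul_cycle, show G * (O * G) * ρ = G * O * G * ρ by
        simp only [Matrix.mul_assoc]]
  rw [e1, e2, e3]
  linear_combination (-(ss ^ 2 * (G * O * G * ρ).trace)) * Complex.I_sq

/-- With `g(θ) = Tr[O · exp(−iθG) · ρ · exp(iθG)]` for a Hermitian unitary `G`,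
Hermitian `O` and density matrix `ρ`, and `O₂ = (O − GOG)/2`, the function `g` is
differentiable with `g′(θ) = −2sin(2θ)·Tr[O₂ρ] − 2cos(2θ)·Tr[iO₂Gρ]`; in particular
`g′(θ) = g(θ + π/4) − g(θ − π/4)`. -/
theorem deriv_rotated_trace
    (d : ℕ) (hd : 1 ≤ d)
    (G O : Matrix (Fin d) (Fin d) ℂ)
    (hGherm : G.IsHermitian) (hGunit : G * G = 1) (hO : O.IsHermitian)
    (ρ : Matrix (Fin d) (Fin d) ℂ) (hρ : ρ.PosSemidef) (hρtr : ρ.trace = 1)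
    (g : ℝ → ℝ)
    (hg : ∀ θ : ℝ, g θ =
      ((O * (NormedSpace.exp ((-(Complex.I * (θ : ℂ))) • G) * ρ *
        NormedSpace.exp ((Complex.I * (θ : ℂ)) • G))).trace.re)) :
    (∀ θ : ℝ, DifferentiableAt ℝ g θ)
    ∧ (∀ θ : ℝ, deriv g θ
        = -2 * Real.sin (2 * θ) * ((Opart2 G O * ρ).trace.re)
          - 2 * Real.cos (2 * θ) * (((Complex.I • (Opart2 G O * G)) * ρ).trace.re))
    ∧ (∀ θ : ℝ, deriv g θ = g (θ + Real.pi / 4) - g (θ - Real.pi / 4)) := by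
  set a : ℝ := (O * ρ).trace.re with ha
  set b : ℝ := ((G * O * G) * ρ).trace.re with hb
  set k : ℝ := (Complex.I * (((G * O) * ρ).trace - ((O * G) * ρ).trace)).re with hk
  -- closed form of g
  have hgf : ∀ θ : ℝ, g θ = Real.cos θ ^ 2 * a + Real.sin θ ^ 2 * b
      + Real.cos θ * Real.sin θ * k := by
    intro θ
    have hWm : NormedSpace.exp ((-(Complex.I * (θ : ℂ))) • G)
        = ((Real.cos θ : ℂ)) • (1 : Matrix (Fin d) (Fin d) ℂ)
          + (-((Real.sin θ : ℂ) * Complex.I)) • G := by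
      rw [exp_smul_sq_one G hGunit]
      congr 1
      · rw [Complex.cosh_neg, mul_comm Complex.I (θ:ℂ), Complex.cosh_mul_I,
          Complex.ofReal_cos]
      · rw [Complex.sinh_neg, mul_comm Complex.I (θ:ℂ), Complex.sinh_mul_I,
          Complex.ofReal_sin]
    have hWp : NormedSpace.exp ((Complex.I * (θ : ℂ)) • G)
        = ((Real.cos θ : ℂ)) • (1 : Matrix (Fin d) (Fin d) ℂ)
          + ((Real.sin θ : ℂ) * Complex.I) • G := by
      rw [show (Complex.I * (θ:ℂ)) • G = ((θ:ℂ) * Complex.I) • G by rw [mul_comm],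
        exp_smul_sq_one G hGunit, Complex.cosh_mul_I, Complex.sinh_mul_I,
        Complex.ofReal_cos, Complex.ofReal_sin]
    rw [hg θ, hWm, hWp, trace_expand]
    have : ((Real.cos θ : ℂ)) ^ 2 * (O * ρ).trace
        + ((Real.cos θ : ℂ) * (Real.sin θ : ℂ) * Complex.I) * ((G * O) * ρ).trace
        - ((Real.cos θ : ℂ) * (Real.sin θ : ℂ) * Complex.I) * ((O * G) * ρ).trace
        + ((Real.sin θ : ℂ)) ^ 2 * ((G * O * G) * ρ).trace
        = ((Real.cos θ ^ 2 : ℝ) : ℂ) * (O * ρ).trace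
          + ((Real.sin θ ^ 2 : ℝ) : ℂ) * ((G * O * G) * ρ).trace
          + ((Real.cos θ * Real.sin θ : ℝ) : ℂ)
            * (Complex.I * (((G * O) * ρ).trace - ((O * G) * ρ).trace)) := by
      push_cast
      ring
    rw [this]
    simp only [Complex.add_re, Complex.re_ofReal_mul]
    rfl
  -- derivative
  have Hg : ∀ θ : ℝ, HasDerivAt g
      (Real.cos (2 * θ) * k - Real.sin (2 * θ) * (a - b)) θ := by
    intro θ
    have hgeq : g = fun θ : ℝ => Real.cos θ ^ 2 * a + Real.sin θ ^ 2 * b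
        + Real.cos θ * Real.sin θ * k := funext hgf
    rw [hgeq]
    have H := ((((Real.hasDerivAt_cos θ).pow 2).mul_const a).add
        (((Real.hasDerivAt_sin θ).pow 2).mul_const b)).add
        (((Real.hasDerivAt_cos θ).mul (Real.hasDerivAt_sin θ)).mul_const k)
    refine H.congr_deriv ?_
    rw [Real.cos_two_mul, Real.sin_two_mul]
    have hpy := Real.sin_sq_add_cos_sq θ
    push_cast
    linear_combination (-k) * hpy
  refine ⟨fun θ => (Hg θ).differentiableAt, fun θ => ?_, fun θ => ?_⟩
  · rw [(Hg θ).deriv]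
    have hre1 : (Opart2 G O * ρ).trace.re = 2⁻¹ * (a - b) := by
      have h4 : (Opart2 G O * ρ).trace
          = ((2⁻¹ : ℝ) : ℂ) * ((O * ρ).trace - ((G * O * G) * ρ).trace) := by
        rw [Opart2]
        simp only [smul_mul_assoc, Matrix.sub_mul, Matrix.trace_smul, Matrix.trace_sub,
          smul_eq_mul]
        norm_num
      rw [h4, Complex.re_ofReal_mul, Complex.sub_re, ha, hb]
    have hre2 : (((Complex.I • (Opart2 G O * G)) * ρ)).trace.re = -(2⁻¹) * k := by
      have hOG : Opart2 G O * G = (2⁻¹ : ℂ) • (O * G - G * O) := by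
        rw [Opart2, smul_mul_assoc, Matrix.sub_mul, Matrix.mul_assoc (G * O) G G, hGunit,
          Matrix.mul_one]
      have h5 : (((Complex.I • (Opart2 G O * G)) * ρ)).trace
          = ((-(2⁻¹) : ℝ) : ℂ) * (Complex.I * (((G * O) * ρ).trace - ((O * G) * ρ).trace)) := by
        rw [hOG]
        simp only [smul_mul_assoc, Matrix.sub_mul, Matrix.trace_smul, Matrix.trace_sub,
          smul_eq_mul]
        push_cast
        ring
      rw [h5, Complex.re_ofReal_mul, hk]
    rw [hre1, hre2]
    ring
  · rw [(Hg θ).deriv, hgf (θ + Real.pi / 4), hgf (θ - Real.pi / 4)]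
    have h2s : Real.sqrt 2 * Real.sqrt 2 = 2 := Real.mul_self_sqrt (by norm_num)
    have hpy := Real.sin_sq_add_cos_sq θ
    rw [Real.cos_add, Real.sin_add, Real.cos_sub, Real.sin_sub, Real.cos_pi_div_four,
      Real.sin_pi_div_four, Real.cos_two_mul, Real.sin_two_mul]
    linear_combination k * hpy + (Real.cos θ * Real.sin θ * a - Real.cos θ * Real.sin θ * b
      - (Real.cos θ ^ 2 - Real.sin θ ^ 2) * k / 2) * h2s
end
end
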